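/- Let χ be a 3-signotope on [n] with block partition [n] = C₁ ∪ C₂, and let O_χ be the induced orientation of the grid C₁ × C₂. Then any 2×2 subgrid of O_χ (given by c₁ < c₁' in C₁ and c₂ < c₂' in C₂) contains at most one sink, i.e., at most one of the four vertices has both of its edges in the subgrid incoming. -/

import Mathlib

/-- Number of sign changes in a list of signs (`true` = `+`, `false` = `-`). -/
def signChanges (l : List Bool) : Nat :=
  (l.zip l.tail).countP (fun p => p.1 != p.2)

/-- The sequence of signs obtained from the set `A` by applying `χ` to `A` minus each of its
elements, deleted in increasing order. -/
def delSeq (chi : Finset Nat -> Bool) (A : Finset Nat) : List Bool :=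
  (List.range A.card).map (fun i => chi (((A.sort (fun a b => a <= b)).eraseIdx i).toFinset))

/-- `chi` is an `r`-signotope on ground set `S`: it is a sign map on `r`-subsets such that for
every `(r+1)`-subset `A ⊆ S` the sign sequence `delSeq chi A` has at most one sign change. -/
def IsSignotopeOn (r : Nat) (S : Finset Nat) (chi : Finset Nat -> Bool) : Prop :=
  forall A : Finset Nat, A ⊆ S -> A.card = r + 1 -> signChanges (delSeq chi A) <= 1
/-- `C 0, ..., C (r-1)` is a block partition of `[n] = {1, ..., n}`. -/
def IsBlockPartition (n r : Nat) (C : Fin r -> Finset Nat) : Prop :=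
  Finset.univ.biUnion C = Finset.Icc 1 n ∧
    ∀ i j : Fin r, i < j -> ∀ c ∈ C i, ∀ c' ∈ C j, c < c'

/-- The orientation `O_χ` induced by a block signotope: `blockDir chi C v w` means that both `v`
and `w` are grid vertices (of the grid `C 0 × ⋯ × C (r-1)`), they differ in exactly one
coordinate `i`, and the edge between them is directed from `v` to `w` according to the sign of
`chi` on the `(r+1)`-set consisting of all entries of `v` together with `w i`. -/
def blockDir {r : Nat} (chi : Finset Nat -> Bool) (C : Fin r -> Finset Nat)
    (v w : Fin r -> Nat) : Prop :=
  (∀ j, v j ∈ C j) ∧ (∀ j, w j ∈ C j) ∧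
    ∃ i, (∀ j, j ≠ i -> v j = w j) ∧
      ((v i < w i ∧ chi (insert (w i) (Finset.image v Finset.univ)) = true) ∨
       (w i < v i ∧ chi (insert (w i) (Finset.image v Finset.univ)) = false))

/-- Two tuples are adjacent in the grid iff they differ in exactly one coordinate. -/
def NatAdj {r : Nat} (v w : Fin r -> Nat) : Prop :=
  ∃ i, v i ≠ w i ∧ ∀ j, j ≠ i -> v j = w j

/-- `v` is a sink of the subgrid `S` of `O_χ`: all edges of the subgrid at `v` are incoming. -/
def IsBlockSink {r : Nat} (chi : Finset Nat -> Bool) (C : Fin r -> Finset Nat)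
    (S : Fin r -> Finset Nat) (v : Fin r -> Nat) : Prop :=
  (∀ i, v i ∈ S i) ∧ ∀ w, (∀ i, w i ∈ S i) -> NatAdj v w -> blockDir chi C w v

/-- for a 3-signotope with a block partition `[n] = C 0 ∪ C 1`, every
`2 × 2` subgrid of the induced orientation `O_χ` (given by `c₁ < c₁'` in `C 0` and
`c₂ < c₂'` in `C 1`) contains at most one sink. -/
lemma image_pair (a b : ℕ) : Finset.image ![a, b] Finset.univ = {a, b} := by
  ext x
  simp [Fin.exists_fin_two, eq_comm]

lemma sink_edge {r : Nat} {chi : Finset Nat -> Bool} {C : Fin r -> Finset Nat}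
    {S : Fin r -> Finset Nat} {v w : Fin r → ℕ} (hv : IsBlockSink chi C S v)
    (hw : ∀ i, w i ∈ S i) (i0 : Fin r) (hne : v i0 ≠ w i0) (heq : ∀ j, j ≠ i0 → v j = w j) :
    (w i0 < v i0 ∧ chi (insert (v i0) (Finset.image w Finset.univ)) = true) ∨
    (v i0 < w i0 ∧ chi (insert (v i0) (Finset.image w Finset.univ)) = false) := by
  obtain ⟨_, _, i, heq', hdir⟩ := hv.2 w hw ⟨i0, hne, heq⟩
  have hii : i = i0 := by
    by_contra hii
    exact hne ((heq' i0 (fun h => hii h.symm)).symm)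
  subst hii
  exact hdir

lemma sink_chi {chi : Finset Nat -> Bool} {C : Fin 2 -> Finset Nat}
    {c1 c1' c2 c2' : ℕ} (h1 : c1 < c1') (h2 : c2 < c2')
    {v : Fin 2 → ℕ} (hv : IsBlockSink chi C ![{c1, c1'}, {c2, c2'}] v) :
    ((v 0 = c1 ∧ chi {c1, c1', v 1} = false) ∨ (v 0 = c1' ∧ chi {c1, c1', v 1} = true)) ∧
    ((v 1 = c2 ∧ chi {v 0, c2, c2'} = false) ∨ (v 1 = c2' ∧ chi {v 0, c2, c2'} = true)) := by
  have hv0 : v 0 = c1 ∨ v 0 = c1' := by have := hv.1 0; simpa using this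
  have hv1 : v 1 = c2 ∨ v 1 = c2' := by have := hv.1 1; simpa using this
  have hne12 : c1 ≠ c1' := h1.ne
  have hne34 : c2 ≠ c2' := h2.ne
  constructor
  · rcases hv0 with h0 | h0
    · left
      refine ⟨h0, ?_⟩
      have hw : ∀ i, (![c1', v 1] : Fin 2 → ℕ) i ∈ (![{c1, c1'}, {c2, c2'}] : Fin 2 → Finset ℕ) i := by
        intro i; fin_cases i
        · simp
        · have := hv.1 1; simpa using this
      have := sink_edge hv hw 0 (by simp [h0, hne12]) (by
        intro j hj; fin_cases j
        · exact absurd rfl hj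
        · simp)
      rw [image_pair] at this
      simp only [Matrix.cons_val_zero, h0] at this
      rcases this with ⟨hlt, _⟩ | ⟨_, hc⟩
      · omega
      · exact hc
    · right
      refine ⟨h0, ?_⟩
      have hw : ∀ i, (![c1, v 1] : Fin 2 → ℕ) i ∈ (![{c1, c1'}, {c2, c2'}] : Fin 2 → Finset ℕ) i := by
        intro i; fin_cases i
        · simp
        · have := hv.1 1; simpa using this
      have := sink_edge hv hw 0 (by simp [h0]; omega) (by
        intro j hj; fin_cases j
        · exact absurd rfl hj
        · simp)
      rw [image_pair] at this
      simp only [Matrix.cons_val_zero, h0] at this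
      rw [Finset.insert_comm] at this
      rcases this with ⟨_, hc⟩ | ⟨hlt, _⟩
      · exact hc
      · omega
  · rcases hv1 with h0 | h0
    · left
      refine ⟨h0, ?_⟩
      have hw : ∀ i, (![v 0, c2'] : Fin 2 → ℕ) i ∈ (![{c1, c1'}, {c2, c2'}] : Fin 2 → Finset ℕ) i := by
        intro i; fin_cases i
        · have := hv.1 0; simpa using this
        · simp
      have := sink_edge hv hw 1 (by simp [h0, hne34]) (by
        intro j hj; fin_cases j
        · simp
        · exact absurd rfl hj)
      rw [image_pair] at this
      simp only [Matrix.cons_val_one, Matrix.head_cons, h0] at this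
      rw [Finset.insert_comm] at this
      rcases this with ⟨hlt, _⟩ | ⟨_, hc⟩
      · simp only [Matrix.cons_val_zero] at hlt; omega
      · exact hc
    · right
      refine ⟨h0, ?_⟩
      have hw : ∀ i, (![v 0, c2] : Fin 2 → ℕ) i ∈ (![{c1, c1'}, {c2, c2'}] : Fin 2 → Finset ℕ) i := by
        intro i; fin_cases i
        · have := hv.1 0; simpa using this
        · simp
      have := sink_edge hv hw 1 (by simp [h0]; omega) (by
        intro j hj; fin_cases j
        · simp
        · exact absurd rfl hj)
      rw [image_pair] at this
      simp only [Matrix.cons_val_one, Matrix.head_cons, h0] at this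
      rw [Finset.insert_comm, Finset.pair_comm c2' c2] at this
      rcases this with ⟨_, hc⟩ | ⟨hlt, _⟩
      · exact hc
      · simp only [Matrix.cons_val_zero] at hlt; omega

theorem two_by_two_subgrid_at_most_one_sink (n : Nat) (chi : Finset Nat -> Bool)
    (C : Fin 2 -> Finset Nat) (hchi : IsSignotopeOn 3 (Finset.Icc 1 n) chi)
    (hC : IsBlockPartition n 2 C)
    (c1 c1' c2 c2' : Nat) (hc1 : c1 ∈ C 0) (hc1' : c1' ∈ C 0) (h1 : c1 < c1')
    (hc2 : c2 ∈ C 1) (hc2' : c2' ∈ C 1) (h2 : c2 < c2') :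
    ∀ v w : Fin 2 -> Nat,
      IsBlockSink chi C ![{c1, c1'}, {c2, c2'}] v ->
      IsBlockSink chi C ![{c1, c1'}, {c2, c2'}] w -> v = w := by
  intro v w hv hw
  obtain ⟨hunion, horder⟩ := hC
  have h12 : c1' < c2 := horder 0 1 (by decide) c1' hc1' c2 hc2
  have hmemIcc : ∀ x : ℕ, ∀ i, x ∈ C i → x ∈ Finset.Icc 1 n := by
    intro x i hx
    rw [← hunion]
    exact Finset.mem_biUnion.2 ⟨i, Finset.mem_univ _, hx⟩
  set A : Finset ℕ := {c1, c1', c2, c2'} with hA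
  have hsub : A ⊆ Finset.Icc 1 n := by
    intro x hx
    simp only [hA, Finset.mem_insert, Finset.mem_singleton] at hx
    rcases hx with rfl | rfl | rfl | rfl
    · exact hmemIcc _ 0 hc1
    · exact hmemIcc _ 0 hc1'
    · exact hmemIcc _ 1 hc2
    · exact hmemIcc _ 1 hc2'
  have hAl : A = [c1, c1', c2, c2'].toFinset := by simp [hA]
  have hnd : ([c1, c1', c2, c2'] : List ℕ).Nodup := by
    simp
    omega
  have hsort : A.sort (fun a b => a <= b) = [c1, c1', c2, c2'] := by
    rw [hAl, List.toFinset_sort _ hnd]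
    simp [List.pairwise_cons]
    omega
  have hcard : A.card = 4 := by
    have := Finset.length_sort (α := ℕ) (fun a b => a <= b) (s := A)
    rw [hsort] at this
    simpa using this.symm
  have hsig := hchi A hsub hcard
  have hdel : delSeq chi A =
      [chi {c1', c2, c2'}, chi {c1, c2, c2'}, chi {c1, c1', c2'}, chi {c1, c1', c2}] := by
    rw [delSeq, hcard, hsort]
    simp [List.range_succ]
  rw [hdel] at hsig
  obtain ⟨hva, hvb⟩ := sink_chi h1 h2 hv
  obtain ⟨hwa, hwb⟩ := sink_chi h1 h2 hw
  rcases hvb with ⟨hv1, hvp⟩ | ⟨hv1, hvp⟩ <;> rcases hwb with ⟨hw1, hwp⟩ | ⟨hw1, hwp⟩ <;>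
    rcases hva with ⟨hv0, hvc⟩ | ⟨hv0, hvc⟩ <;> rcases hwa with ⟨hw0, hwc⟩ | ⟨hw0, hwc⟩ <;>
    rw [hv1] at hvc <;> rw [hv0] at hvp <;> rw [hw1] at hwc <;> rw [hw0] at hwp
  all_goals first
    | (rw [hvc] at hwc; exact Bool.noConfusion hwc)
    | (rw [hwc] at hvc; exact Bool.noConfusion hvc)
    | (rw [hvp] at hwp; exact Bool.noConfusion hwp)
    | (rw [hwp] at hvp; exact Bool.noConfusion hvp)
    | (rw [hvc, hwc, hvp, hwp] at hsig; simp [signChanges] at hsig)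
    | (funext i; fin_cases i <;> simp [hv0, hw0, hv1, hw1])
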